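/- For every natural number n ≥ 1 and all reals 0 < q < p ≤ 1, one has p²q[n]_{p,q}/[n+1]_{p,q} ≤ 1 and sup_{x ≥ 0} | L_n^{p,q}( t/(1+t); x ) − x/(1+x) | ≤ 1 − p²q[n]_{p,q}/[n+1]_{p,q}. -/

import Mathlib

open Finset Filter
open scoped Classical

noncomputable section

/-- The `(p,q)`-integer `[n]_{p,q} = (p^n - q^n)/(p - q)`. -/
def pqInt (p q : ℝ) (n : ℕ) : ℝ := (p ^ n - q ^ n) / (p - q)

/-- The `(p,q)`-factorial. -/
def pqFact (p q : ℝ) : ℕ → ℝ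
  | 0 => 1
  | n + 1 => pqFact p q n * pqInt p q (n + 1)

/-- The `(p,q)`-binomial coefficient. -/
def pqBinom (p q : ℝ) (n k : ℕ) : ℝ :=
  pqFact p q n / (pqFact p q k * pqFact p q (n - k))

/-- `ℓ_n^{p,q}(x) = ∏_{s=0}^{n-1} (p^s + q^s x)`. -/
def pqEll (p q : ℝ) (n : ℕ) (x : ℝ) : ℝ :=
  ∏ s ∈ Finset.range n, (p ^ s + q ^ s * x)

/-- The node `p^{n-k+1}[k]_{p,q} / ([n-k+1]_{p,q} q^k)`. -/
def pqNode (p q : ℝ) (n k : ℕ) : ℝ :=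
  p ^ (n - k + 1) * pqInt p q k / (pqInt p q (n - k + 1) * q ^ k)

/-- The `(p,q)`-Bleimann–Butzer–Hahn operator. -/
def bbh (p q : ℝ) (n : ℕ) (f : ℝ → ℝ) (x : ℝ) : ℝ :=
  (p * q / pqEll p q n x) *
    ∑ k ∈ Finset.range (n + 1),
      f (pqNode p q n k) * p ^ ((n - k) * (n - k - 1) / 2) *
        q ^ (k * (k - 1) / 2) * pqBinom p q n k * x ^ k

/-- `δ_n(x)` from Theorem 3.1. -/
def pqDelta (p q : ℝ) (n : ℕ) (x : ℝ) : ℝ :=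
  (x / (1 + x)) ^ 2 *
      (p ^ 2 * q ^ 3 * pqInt p q n * pqInt p q (n - 1) / (pqInt p q (n + 1)) ^ 2 *
          ((1 + x) / (p + q * x)) -
        2 * p * q * pqInt p q n / pqInt p q (n + 1) + 1) +
    p ^ (n + 2) * q * pqInt p q n / (pqInt p q (n + 1)) ^ 2 * (x / (1 + x))

/-- Statistical convergence of a real sequence. -/
def StatConv (a : ℕ → ℝ) (l : ℝ) : Prop :=
  ∀ ε > (0 : ℝ), Tendsto (fun n : ℕ =>
    (((Finset.range (n + 1)).filter (fun k => ε ≤ |a k - l|)).card : ℝ) / n)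
    atTop (nhds 0)

/-- A modulus of continuity. -/
def IsModulus (ω : ℝ → ℝ) : Prop :=
  (∀ δ, 0 ≤ δ → 0 ≤ ω δ) ∧
  (∀ δ₁ δ₂, 0 ≤ δ₁ → δ₁ ≤ δ₂ → ω δ₁ ≤ ω δ₂) ∧
  (∀ δ₁ δ₂, 0 ≤ δ₁ → 0 ≤ δ₂ → ω (δ₁ + δ₂) ≤ ω δ₁ + ω δ₂) ∧
  Tendsto ω (nhdsWithin 0 (Set.Ioi 0)) (nhds 0)

/-- Membership in the class `H_ω`. -/
def MemHomega (ω f : ℝ → ℝ) : Prop :=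
  ∀ x y : ℝ, 0 ≤ x → 0 ≤ y → |f x - f y| ≤ ω |x / (1 + x) - y / (1 + y)|

/-- The modulus `ω̃(f; δ)`. -/
def omegaTilde (f : ℝ → ℝ) (δ : ℝ) : ℝ :=
  sSup {d | ∃ t x : ℝ, 0 ≤ t ∧ 0 ≤ x ∧ |t / (1 + t) - x / (1 + x)| ≤ δ ∧ d = |f t - f x|}

/-- The bivariate `(p,q)`-Bleimann–Butzer–Hahn operator. -/
def bbh2 (p₁ p₂ q₁ q₂ : ℝ) (n₁ n₂ : ℕ) (f : ℝ → ℝ → ℝ) (x y : ℝ) : ℝ :=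
  (p₁ * p₂ * q₁ * q₂ / (pqEll p₁ q₁ n₁ x * pqEll p₂ q₂ n₂ y)) *
    ∑ k₁ ∈ Finset.range (n₁ + 1), ∑ k₂ ∈ Finset.range (n₂ + 1),
      f (pqNode p₁ q₁ n₁ k₁) (pqNode p₂ q₂ n₂ k₂) *
        p₁ ^ ((n₁ - k₁) * (n₁ - k₁ - 1) / 2) * q₁ ^ (k₁ * (k₁ - 1) / 2) *
        p₂ ^ ((n₂ - k₂) * (n₂ - k₂ - 1) / 2) * q₂ ^ (k₂ * (k₂ - 1) / 2) *
        pqBinom p₁ q₁ n₁ k₁ * pqBinom p₂ q₂ n₂ k₂ * x ^ k₁ * y ^ k₂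

/-- Statistical convergence of a double real sequence (Pringsheim sense). -/
def StatConv2 (a : ℕ → ℕ → ℝ) (l : ℝ) : Prop :=
  ∀ ε > (0 : ℝ), Tendsto (fun N : ℕ × ℕ =>
    ((((Finset.range (N.1 + 1)) ×ˢ (Finset.range (N.2 + 1))).filter
        (fun jk => ε ≤ |a jk.1 jk.2 - l|)).card : ℝ) / (N.1 * N.2))
    atTop (nhds 0)

/-- A bivariate modulus of continuity. -/
def IsModulus2 (ω : ℝ → ℝ → ℝ) : Prop :=
  (∀ a b, 0 ≤ a → 0 ≤ b → 0 ≤ ω a b) ∧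
  (∀ a a' b, 0 ≤ a → a ≤ a' → 0 ≤ b → ω a b ≤ ω a' b) ∧
  (∀ a b b', 0 ≤ a → 0 ≤ b → b ≤ b' → ω a b ≤ ω a b') ∧
  (∀ a a' b, 0 ≤ a → 0 ≤ a' → 0 ≤ b → ω (a + a') b ≤ ω a b + ω a' b) ∧
  (∀ a b b', 0 ≤ a → 0 ≤ b → 0 ≤ b' → ω a (b + b') ≤ ω a b + ω a b') ∧
  Tendsto (fun d : ℝ × ℝ => ω d.1 d.2)
    (nhdsWithin (0, 0) (Set.Ioi 0 ×ˢ Set.Ioi 0)) (nhds 0)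

/-- Membership in the class `H_{ω₂}`. -/
def MemHomega2 (ω g : ℝ → ℝ → ℝ) : Prop :=
  ∀ u₁ v₁ u₂ v₂ : ℝ, 0 ≤ u₁ → 0 ≤ v₁ → 0 ≤ u₂ → 0 ≤ v₂ →
    |g u₁ v₁ - g u₂ v₂| ≤
      ω |u₁ / (1 + u₁) - u₂ / (1 + u₂)| |v₁ / (1 + v₁) - v₂ / (1 + v₂)|

/-- The bivariate modulus `ω̃(g; δ₁, δ₂)`. -/
def omegaTilde2 (g : ℝ → ℝ → ℝ) (δ₁ δ₂ : ℝ) : ℝ :=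
  sSup {d | ∃ t s x y : ℝ, 0 ≤ t ∧ 0 ≤ s ∧ 0 ≤ x ∧ 0 ≤ y ∧
    |t / (1 + t) - x / (1 + x)| ≤ δ₁ ∧ |s / (1 + s) - y / (1 + y)| ≤ δ₂ ∧
    d = |g t s - g x y|}


private lemma tri_succ (k : ℕ) : (k+1)*k/2 = k*(k-1)/2 + k := by
  cases k with
  | zero => rfl
  | succ m =>
    have h : (m+1+1)*(m+1) = (m+1)*m + (m+1)*2 := by ring
    simp [h, Nat.add_mul_div_right]

section
variable {p q : ℝ} (hq : 0 < q) (hqp : q < p)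
include hq hqp

private lemma pqInt_pos' {n : ℕ} (hn : 1 ≤ n) : 0 < pqInt p q n := by
  unfold pqInt
  apply div_pos
  · have := pow_lt_pow_left₀ hqp hq.le (by omega : n ≠ 0)
    linarith
  · linarith

private lemma pqInt_nonneg' (n : ℕ) : 0 ≤ pqInt p q n := by
  cases n with
  | zero => simp [pqInt]
  | succ m => exact (pqInt_pos' hq hqp (by omega)).le

private lemma pqFact_pos' (n : ℕ) : 0 < pqFact p q n := by
  induction n with
  | zero => norm_num [pqFact]
  | succ m ih => exact mul_pos ih (pqInt_pos' hq hqp (by omega))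

private lemma pqInt_add' (m k : ℕ) :
    pqInt p q (m+k) = p^k * pqInt p q m + q^m * pqInt p q k := by
  have hpq : p - q ≠ 0 := by linarith
  unfold pqInt
  field_simp
  ring

end
section
variable {p q : ℝ} (hq : 0 < q) (hqp : q < p)
include hq hqp

private lemma pqBinom_zero' (n : ℕ) : pqBinom p q n 0 = 1 := by
  have h := (pqFact_pos' hq hqp n).ne'
  simp [pqBinom, pqFact, h]

private lemma pqBinom_self' (n : ℕ) : pqBinom p q n n = 1 := by
  have h := (pqFact_pos' hq hqp n).ne'
  simp [pqBinom, pqFact, h]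

private lemma pqPascal (n j : ℕ) (hj : j < n) :
    pqBinom p q (n+1) (j+1)
      = p^(j+1) * pqBinom p q n (j+1) + q^(n-j) * pqBinom p q n j := by
  obtain ⟨b, rfl⟩ : ∃ b, n = j + b + 1 := ⟨n - j - 1, by omega⟩
  have e1 : j + b + 1 + 1 - (j+1) = b + 1 := by omega
  have e2 : j + b + 1 - (j+1) = b := by omega
  have e3 : j + b + 1 - j = b + 1 := by omega
  have e4 : (j+b+1+1) = (b+1) + (j+1) := by omega
  rw [pqBinom, pqBinom, pqBinom, e1, e2, e3]
  have hf1 : pqFact p q (j+b+1+1) = pqFact p q (j+b+1) * pqInt p q (j+b+1+1) := rfl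
  have hf2 : pqFact p q (j+1) = pqFact p q j * pqInt p q (j+1) := rfl
  have hf3 : pqFact p q (b+1) = pqFact p q b * pqInt p q (b+1) := rfl
  have hint : pqInt p q (j+b+1+1) = p^(j+1) * pqInt p q (b+1) + q^(b+1) * pqInt p q (j+1) := by
    rw [e4, pqInt_add' hq hqp]
  rw [hf1, hf2, hf3, hint]
  have h1 := (pqFact_pos' hq hqp j).ne'
  have h2 := (pqFact_pos' hq hqp b).ne'
  have h3 := (pqInt_pos' hq hqp (show 1 ≤ j+1 by omega)).ne'
  have h4 := (pqInt_pos' hq hqp (show 1 ≤ b+1 by omega)).ne'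
  field_simp

private lemma pqAbsorb (m j : ℕ) :
    pqInt p q (j+1) * pqBinom p q (m+1) (j+1) = pqInt p q (m+1) * pqBinom p q m j := by
  have e1 : m + 1 - (j+1) = m - j := by omega
  rw [pqBinom, pqBinom, e1]
  have hf1 : pqFact p q (m+1) = pqFact p q m * pqInt p q (m+1) := rfl
  have hf2 : pqFact p q (j+1) = pqFact p q j * pqInt p q (j+1) := rfl
  rw [hf1, hf2]
  have h1 := (pqFact_pos' hq hqp j).ne'
  have h2 := (pqFact_pos' hq hqp (m-j)).ne'
  have h3 := (pqInt_pos' hq hqp (show 1 ≤ j+1 by omega)).ne'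
  field_simp

private lemma pqGauss (n : ℕ) (u v : ℝ) :
    ∑ k ∈ range (n+1),
        p^((n-k)*(n-k-1)/2) * q^(k*(k-1)/2) * pqBinom p q n k * u^(n-k) * v^k
      = ∏ s ∈ range n, (p^s * u + q^s * v) := by
  induction n with
  | zero => simp [pqBinom_zero' hq hqp]
  | succ n ih =>
    rw [prod_range_succ, ← ih, Finset.sum_range_succ, Finset.sum_range_succ']
    rw [mul_add, Finset.sum_mul, Finset.sum_mul, Finset.sum_range_succ',
      Finset.sum_range_succ]
    have hbot : p^((n+1-0)*(n+1-0-1)/2) * q^(0*(0-1)/2) * pqBinom p q (n+1) 0 * u^(n+1-0) * v^0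
        = p^((n-0)*(n-0-1)/2) * q^(0*(0-1)/2) * pqBinom p q n 0 * u^(n-0) * v^0 * (p^n*u) := by
      simp only [Nat.sub_zero, pow_zero, mul_one]
      rw [pqBinom_zero' hq hqp, pqBinom_zero' hq hqp]
      have e : (n+1)*(n+1-1)/2 = n*(n-1)/2 + n := by
        rw [Nat.add_sub_cancel]; exact tri_succ n
      rw [e, pow_add]
      ring
    have htop : p^((n+1-(n+1))*(n+1-(n+1)-1)/2) * q^((n+1)*((n+1)-1)/2) * pqBinom p q (n+1) (n+1) * u^(n+1-(n+1)) * v^(n+1)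
        = p^((n-n)*(n-n-1)/2) * q^(n*(n-1)/2) * pqBinom p q n n * u^(n-n) * v^n * (q^n*v) := by
      simp only [Nat.sub_self, pow_zero, mul_one, one_mul]
      rw [pqBinom_self' hq hqp, pqBinom_self' hq hqp]
      have e : (n+1)*((n+1)-1)/2 = n*(n-1)/2 + n := by
        rw [Nat.add_sub_cancel]; exact tri_succ n
      rw [e, pow_add]
      ring
    rw [hbot, htop]
    have hmid : (∑ k ∈ Finset.range n,
          p ^ ((n + 1 - (k + 1)) * (n + 1 - (k + 1) - 1) / 2) * q ^ ((k + 1) * (k + 1 - 1) / 2) *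
            pqBinom p q (n + 1) (k + 1) * u ^ (n + 1 - (k + 1)) * v ^ (k + 1))
        = ∑ k ∈ Finset.range n,
            (p ^ ((n - (k + 1)) * (n - (k + 1) - 1) / 2) * q ^ ((k + 1) * (k + 1 - 1) / 2) *
              pqBinom p q n (k + 1) * u ^ (n - (k + 1)) * v ^ (k + 1) * (p ^ n * u)
            + p ^ ((n - k) * (n - k - 1) / 2) * q ^ (k * (k - 1) / 2) * pqBinom p q n k *
                u ^ (n - k) * v ^ k * (q ^ n * v)) := by
      refine Finset.sum_congr rfl fun j hj => ?_
      have hjn : j < n := Finset.mem_range.mp hj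
      obtain ⟨b, rfl⟩ : ∃ b, n = j + b + 1 := ⟨n - j - 1, by omega⟩
      rw [pqPascal hq hqp _ _ hjn]
      have e1 : j + b + 1 + 1 - (j+1) = b + 1 := by omega
      have e2 : j + b + 1 - (j+1) = b := by omega
      have e3 : j + b + 1 - j = b + 1 := by omega
      rw [e1, e2, e3]
      have t1 : (b+1)*(b+1-1)/2 = b*(b-1)/2 + b := by
        rw [Nat.add_sub_cancel]; exact tri_succ b
      have t2 : (j+1)*(j+1-1)/2 = j*(j-1)/2 + j := by
        rw [Nat.add_sub_cancel]; exact tri_succ j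
      rw [t1, t2]
      simp only [pow_succ, pow_add]
      ring
    rw [hmid, Finset.sum_add_distrib]
    ring

end
section
variable {p q : ℝ} (hq : 0 < q) (hqp : q < p)
include hq hqp

private lemma node_eval (n k : ℕ) (hk : k ≤ n) :
    pqNode p q n k / (1 + pqNode p q n k)
      = p^(n-k+1) * pqInt p q k / pqInt p q (n+1) := by
  have hp : 0 < p := hq.trans hqp
  have hm : k + (n - k + 1) = n + 1 := by omega
  have hmpos : 0 < pqInt p q (n-k+1) := pqInt_pos' hq hqp (by omega)
  have hqk : 0 < q^k := pow_pos hq k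
  have hknn : 0 ≤ pqInt p q k := pqInt_nonneg' hq hqp k
  have hn1 : 0 < pqInt p q (n+1) := pqInt_pos' hq hqp (by omega)
  have hsum : pqInt p q (n+1)
      = p^(n-k+1) * pqInt p q k + q^k * pqInt p q (n-k+1) := by
    rw [← hm, pqInt_add' hq hqp]
  have hD : pqInt p q (n-k+1) * q^k ≠ 0 := by positivity
  rw [pqNode]
  have h1 : 1 + p^(n-k+1) * pqInt p q k / (pqInt p q (n-k+1) * q^k)
      = pqInt p q (n+1) / (pqInt p q (n-k+1) * q^k) := by
    rw [hsum]; field_simp; ring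
  rw [h1]
  rw [div_div_div_cancel_right₀]
  exact hD

end
section
variable {p q : ℝ} (hq : 0 < q) (hqp : q < p)
include hq hqp

private lemma bbh_eval (n : ℕ) (hn : 1 ≤ n) (x : ℝ) (hx : 0 ≤ x) :
    bbh p q n (fun t => t/(1+t)) x
      = (p^2 * q * pqInt p q n / pqInt p q (n+1)) * (x/(1+x)) := by
  have hp : 0 < p := hq.trans hqp
  obtain ⟨m, rfl⟩ : ∃ m, n = m + 1 := ⟨n-1, by omega⟩
  have hn1 : 0 < pqInt p q (m+1+1) := pqInt_pos' hq hqp (by omega)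
  have hEpos : 0 < ∏ s ∈ range m, (p^s * p + q^s * (q*x)) := by
    apply Finset.prod_pos
    intro s _
    have : 0 < p^s * p := by positivity
    nlinarith [pow_nonneg hq.le s, mul_nonneg hq.le hx]
  have hx1 : (0:ℝ) < 1 + x := by linarith
  -- evaluate the sum
  have hsum : ∑ k ∈ Finset.range (m+1+1),
        (fun t => t/(1+t)) (pqNode p q (m+1) k) * p ^ ((m+1-k) * (m+1-k-1) / 2) *
          q ^ (k * (k-1) / 2) * pqBinom p q (m+1) k * x ^ k
      = (pqInt p q (m+1) * p * x / pqInt p q (m+1+1)) *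
          ∏ s ∈ range m, (p^s * p + q^s * (q*x)) := by
    have hcong : ∀ k ∈ Finset.range (m+1+1),
        (fun t => t/(1+t)) (pqNode p q (m+1) k) * p ^ ((m+1-k) * (m+1-k-1) / 2) *
          q ^ (k * (k-1) / 2) * pqBinom p q (m+1) k * x ^ k
        = (p^(m+1-k+1) * pqInt p q k / pqInt p q (m+1+1)) * p ^ ((m+1-k) * (m+1-k-1) / 2) *
          q ^ (k * (k-1) / 2) * pqBinom p q (m+1) k * x ^ k := by
      intro k hk
      have hk' : k ≤ m+1 := by
        have := Finset.mem_range.mp hk; omega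
      beta_reduce
      rw [node_eval hq hqp (m+1) k hk']
    rw [Finset.sum_congr rfl hcong, Finset.sum_range_succ']
    have h0 : pqInt p q 0 = 0 := by simp [pqInt]
    rw [← pqGauss hq hqp m p (q*x), Finset.mul_sum]
    rw [h0]
    simp only [mul_zero, zero_mul, zero_div, add_zero]
    refine Finset.sum_congr rfl fun j hj => ?_
    have e : m + 1 - (j+1) = m - j := by omega
    have t2 : (j+1)*(j+1-1)/2 = j*(j-1)/2 + j := by
      rw [Nat.add_sub_cancel]; exact tri_succ j
    rw [e, t2]
    linear_combination (p^(m-j) * p * p^((m-j)*(m-j-1)/2) * q^(j*(j-1)/2) * q^j * x^j * x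
      / pqInt p q (m+1+1)) * pqAbsorb hq hqp m j
  -- now assemble
  have hEll : pqEll p q (m+1) x = (∏ s ∈ range m, (p^s * p + q^s * (q*x))) * (1 + x) := by
    rw [pqEll, Finset.prod_range_succ']
    congr 1
    · exact Finset.prod_congr rfl fun s _ => by ring
    · norm_num
  rw [bbh, hsum, hEll]
  field_simp
  ring

end

/-- a uniform bound for the first test function. -/
theorem bbh_first_moment_bound (n : ℕ) (hn : 1 ≤ n) (p q : ℝ)
    (hq : 0 < q) (hqp : q < p) (hp : p ≤ 1) :
    p ^ 2 * q * pqInt p q n / pqInt p q (n + 1) ≤ 1 ∧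
      ∀ x : ℝ, 0 ≤ x →
        |bbh p q n (fun t => t / (1 + t)) x - x / (1 + x)| ≤
          1 - p ^ 2 * q * pqInt p q n / pqInt p q (n + 1) := by
  
  have hp0 : 0 < p := hq.trans hqp
  have hn1 : 0 < pqInt p q (n+1) := pqInt_pos' hq hqp (by omega)
  have hnn : 0 ≤ pqInt p q n := pqInt_nonneg' hq hqp n
  have key : p^2*q*(p^n - q^n) ≤ p^(n+1) - q^(n+1) := by
    have h1 : q^(n+1) ≤ p^(n+1) := pow_le_pow_left₀ hq.le hqp.le _
    have h2 : 0 < q^(n+1) := pow_pos hq _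
    have h5 : q^(n+1)*(1-p^2) ≤ p^(n+1)*(1-p*q) := by
      apply mul_le_mul h1 (by nlinarith) (by nlinarith) (by positivity)
    have f1 : p^2*q*p^n = p^(n+1)*(p*q) := by rw [pow_succ]; ring
    have f2 : p^2*q*q^n = q^(n+1)*p^2 := by rw [pow_succ]; ring
    linarith [h5, f1, f2]
  have hα1 : p^2*q*pqInt p q n ≤ pqInt p q (n+1) := by
    rw [pqInt, pqInt, ← mul_div_assoc]
    exact div_le_div_of_nonneg_right key (by linarith)
  have hα : p ^ 2 * q * pqInt p q n / pqInt p q (n + 1) ≤ 1 :=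
    (div_le_one hn1).mpr hα1
  have hα0 : 0 ≤ p ^ 2 * q * pqInt p q n / pqInt p q (n + 1) :=
    div_nonneg (by positivity) hn1.le
  refine ⟨hα, fun x hx => ?_⟩
  rw [bbh_eval hq hqp n hn x hx]
  set α := p ^ 2 * q * pqInt p q n / pqInt p q (n + 1) with hαdef
  have hx1 : (0:ℝ) < 1 + x := by linarith
  have hr0 : 0 ≤ x/(1+x) := by positivity
  have hr1 : x/(1+x) ≤ 1 := (div_le_one hx1).mpr (by linarith)
  have h2 : α * (x/(1+x)) - x/(1+x) = -((1-α)*(x/(1+x))) := by ring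
  rw [h2, abs_neg, abs_of_nonneg (by nlinarith : (0:ℝ) ≤ (1-α)*(x/(1+x)))]
  nlinarith [mul_le_mul_of_nonneg_left hr1 (by linarith : (0:ℝ) ≤ 1 - α)]
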